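/- Let f : ℕ → ℕ be an injective function and S_f the associated isometry on ℓ²(ℕ) given by S_f e_k = e_{f(k)}. Then S_f is a pure isometry (i.e. ⋂_{n≥1} Ran(S_f^n) = {0}) if and only if ⋂_{n≥1} f^n(ℕ) = ∅. -/

import Mathlib

noncomputable def e (k : ℕ) : lp (fun _ : ℕ => ℂ) 2 := lp.single 2 k 1

noncomputable def coordCLM (j : ℕ) : lp (fun _ : ℕ => ℂ) 2 →L[ℂ] ℂ :=
  LinearMap.mkContinuous
    { toFun := fun x => x j
      map_add' := fun _ _ => rfl
      map_smul' := fun _ _ => rfl } 1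
    (fun x => by rw [one_mul]; exact lp.norm_apply_le_norm (by norm_num) x j)

/-- `S_f` is a pure isometry iff `⋂_{n≥1} f^n(ℕ) = ∅`. -/
theorem stmt1 (f : ℕ → ℕ) (hf : Function.Injective f)
    (S : lp (fun _ : ℕ => ℂ) 2 →L[ℂ] lp (fun _ : ℕ => ℂ) 2)
    (hS : ∀ k, S (e k) = e (f k)) :
    (⋂ n ∈ Set.Ici 1, Set.range ⇑(S ^ n)) = {0} ↔
      (⋂ n ∈ Set.Ici 1, Set.range f^[n]) = ∅ := by
  have Sn : ∀ n k, (S ^ n) (e k) = e (f^[n] k) := by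
    intro n
    induction n with
    | zero => intro k; simp
    | succ n ih =>
      intro k
      rw [Function.iterate_succ', pow_succ']
      simp only [ContinuousLinearMap.mul_apply, Function.comp_apply, ih, hS]
  have key : ∀ n j, j ∉ Set.range f^[n] → ∀ y, ((S ^ n) y) j = 0 := by
    intro n j hj y
    have hy := lp.hasSum_single (E := fun _ : ℕ => ℂ) (p := 2) (by norm_num) y
    have h2 := ((coordCLM j).comp (S ^ n)).hasSum hy
    have hterm : ∀ k, ((coordCLM j).comp (S ^ n)) (lp.single 2 k (y k)) = 0 := by
      intro k
      have hsingle : lp.single 2 k (y k) = (y k) • e k := by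
        rw [e, ← lp.single_smul]
        norm_num
      have hjk : j ≠ f^[n] k := fun hjk => hj ⟨k, hjk.symm⟩
      simp only [hsingle, ContinuousLinearMap.comp_apply, map_smul, Sn, coordCLM,
        LinearMap.mkContinuous_apply, LinearMap.coe_mk, AddHom.coe_mk, smul_eq_mul]
      rw [e]; exact mul_eq_zero_of_right _ (lp.single_apply_ne 2 _ _ hjk)
    rw [funext hterm] at h2
    have h0 : ((coordCLM j).comp (S ^ n)) y = 0 := h2.unique hasSum_zero
    exact h0
  constructor
  · intro h
    by_contra hne
    obtain ⟨j, hj⟩ := Set.nonempty_iff_ne_empty.mpr hne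
    have hmem : e j ∈ ⋂ n ∈ Set.Ici 1, Set.range ⇑(S ^ n) := by
      simp only [Set.mem_iInter] at hj ⊢
      intro n hn
      obtain ⟨k, hk⟩ := hj n hn
      exact ⟨e k, by rw [Sn, hk]⟩
    rw [h] at hmem
    have h0 : e j = 0 := hmem
    have := congrArg (fun x : lp (fun _ : ℕ => ℂ) 2 => x j) h0
    simp only [e, lp.single_apply_self] at this
    simpa using this
  · intro h
    ext x
    simp only [Set.mem_iInter, Set.mem_singleton_iff]
    constructor
    · intro hx
      apply lp.ext
      funext j
      have hj : j ∉ ⋂ n ∈ Set.Ici 1, Set.range f^[n] := by rw [h]; simp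
      simp only [Set.mem_iInter] at hj
      push_neg at hj
      obtain ⟨n, hn1, hjn⟩ := hj
      obtain ⟨y, hy⟩ := hx n hn1
      have hz := key n j hjn y
      rw [hy] at hz
      simpa using hz
    · rintro rfl
      intro n _
      exact ⟨0, map_zero _⟩
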